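/- arXiv:1207.4735 — 2 statements merged into one kernel-verified Lean document; each statement's English description precedes it below -/
import Mathlib

section
/- Let β ∈ (0,1), N ≥ 1 and C ≥ 0, and let a : (0,∞) → ℂ be continuously differentiable with |a(r)| ≤ C r^{β−1}(1+r)^{−N} and |a'(r)| ≤ C r^{β−2}(1+r)^{−N} for all r > 0. Then the integral ∫_0^∞ e^{−itr} a(r) dr converges absolutely for every t, and there exists a constant C' depending only on C, β, N such that |∫_0^∞ e^{−itr} a(r) dr| ≤ C' t^{−β} for every t ≥ 1. -/
open MeasureTheory Set Filter

private lemma expHasDeriv (t r : ℝ) :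
    HasDerivAt (fun r : ℝ => Complex.exp (-(Complex.I * t * r)))
      (-(Complex.I * t) * Complex.exp (-(Complex.I * t * r))) r := by
  have h1 : HasDerivAt (fun r : ℝ => -(Complex.I * t * (r : ℂ))) (-(Complex.I * t)) r := by
    simpa using ((hasDerivAt_id r).ofReal_comp.const_mul (Complex.I * t)).fun_neg
  simpa [mul_comm] using h1.cexp

private lemma expNorm (t r : ℝ) : ‖Complex.exp (-(Complex.I * t * r))‖ = 1 := by
  rw [Complex.norm_exp]
  simp

set_option maxHeartbeats 2000000 in
/-- van der Corput-type estimate. If `a` is continuously differentiable on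
`(0,∞)` with `|a(r)| ≤ C r^{β-1}(1+r)^{-N}` and `|a'(r)| ≤ C r^{β-2}(1+r)^{-N}` for `r > 0`,
where `β ∈ (0,1)`, `N ≥ 1`, `C ≥ 0`, then `∫_0^∞ e^{-itr} a(r) dr` converges absolutely for
every `t`, and `|∫_0^∞ e^{-itr} a(r) dr| ≤ C' t^{-β}` for all `t ≥ 1`, with `C'` depending
only on `C`, `β`, `N`. -/
theorem stmt3 (β N C : ℝ) (hβ0 : 0 < β) (hβ1 : β < 1) (hN : 1 ≤ N) (hC : 0 ≤ C) :
    ∃ C' : ℝ, ∀ a : ℝ → ℂ,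
      ContDiffOn ℝ 1 a (Set.Ioi 0) →
      (∀ r : ℝ, 0 < r → ‖a r‖ ≤ C * r ^ (β - 1) * (1 + r) ^ (-N)) →
      (∀ r : ℝ, 0 < r → ‖deriv a r‖ ≤ C * r ^ (β - 2) * (1 + r) ^ (-N)) →
      (∀ t : ℝ, IntegrableOn
          (fun r : ℝ => Complex.exp (-(Complex.I * t * r)) * a r) (Set.Ioi 0)) ∧
      ∀ t : ℝ, 1 ≤ t →
        ‖∫ r in Set.Ioi (0 : ℝ), Complex.exp (-(Complex.I * t * r)) * a r‖ ≤
          C' * t ^ (-β) := by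
  refine ⟨C * (1/β + 1 + 1/(1-β)), fun a ha hb hb' => ?_⟩
  have hcont : ContinuousOn a (Set.Ioi 0) := ha.continuousOn
  have hdcont : ContinuousOn (deriv a) (Set.Ioi 0) :=
    ha.continuousOn_deriv_of_isOpen isOpen_Ioi le_rfl
  have hdiff : ∀ r : ℝ, 0 < r → HasDerivAt a (deriv a r) r := fun r hr =>
    ((ha.contDiffAt (isOpen_Ioi.mem_nhds hr)).differentiableAt one_ne_zero).hasDerivAt
  -- pointwise bound facts
  have hb1 : ∀ r : ℝ, 0 < r → ‖a r‖ ≤ C * r ^ (β - 1) := by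
    intro r hr
    refine (hb r hr).trans ?_
    have h1 : (1 + r) ^ (-N) ≤ 1 :=
      Real.rpow_le_one_of_one_le_of_nonpos (by linarith) (by linarith)
    calc C * r ^ (β-1) * (1+r)^(-N) ≤ C * r ^ (β-1) * 1 := by
          apply mul_le_mul_of_nonneg_left h1 (by positivity)
      _ = C * r ^ (β-1) := by ring
  have hb2 : ∀ r : ℝ, 1 ≤ r → ‖a r‖ ≤ C * r ^ (β - 1 - N) := by
    intro r hr
    have hr0 : (0:ℝ) < r := by linarith
    refine (hb r hr0).trans ?_
    have h1 : (1 + r) ^ (-N) ≤ r ^ (-N) :=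
      Real.rpow_le_rpow_of_nonpos hr0 (by linarith) (by linarith)
    calc C * r ^ (β-1) * (1+r)^(-N) ≤ C * r ^ (β-1) * r ^ (-N) := by
          apply mul_le_mul_of_nonneg_left h1 (by positivity)
      _ = C * r ^ (β-1-N) := by rw [mul_assoc, ← Real.rpow_add hr0]; ring_nf
  have hb1' : ∀ r : ℝ, 0 < r → ‖deriv a r‖ ≤ C * r ^ (β - 2) := by
    intro r hr
    refine (hb' r hr).trans ?_
    have h1 : (1 + r) ^ (-N) ≤ 1 :=
      Real.rpow_le_one_of_one_le_of_nonpos (by linarith) (by linarith)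
    calc C * r ^ (β-2) * (1+r)^(-N) ≤ C * r ^ (β-2) * 1 := by
          apply mul_le_mul_of_nonneg_left h1 (by positivity)
      _ = C * r ^ (β-2) := by ring
  -- measurability of the integrand
  have hmcont : ∀ t : ℝ, ContinuousOn
      (fun r : ℝ => Complex.exp (-(Complex.I * t * r)) * a r) (Set.Ioi 0) := by
    intro t
    exact (Complex.continuous_exp.comp (by continuity)).continuousOn.mul hcont
  -- integrability on (0,1]
  have hint1 : ∀ t : ℝ, IntegrableOn
      (fun r : ℝ => Complex.exp (-(Complex.I * t * r)) * a r) (Set.Ioc 0 1) := by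
    intro t
    have hg : IntegrableOn (fun r : ℝ => C * r ^ (β-1)) (Set.Ioc 0 1) := by
      have := (intervalIntegral.intervalIntegrable_rpow' (a := 0) (b := 1)
        (show (-1:ℝ) < β - 1 by linarith)).const_mul C
      rwa [intervalIntegrable_iff_integrableOn_Ioc_of_le (by norm_num)] at this
    refine Integrable.mono' hg ?_ ?_
    · exact ((hmcont t).mono Set.Ioc_subset_Ioi_self).aestronglyMeasurable measurableSet_Ioc
    · filter_upwards [ae_restrict_mem measurableSet_Ioc] with r hr
      rw [norm_mul, expNorm, one_mul]
      exact hb1 r hr.1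
  -- integrability on (1,∞)
  have hint2 : ∀ t : ℝ, IntegrableOn
      (fun r : ℝ => Complex.exp (-(Complex.I * t * r)) * a r) (Set.Ioi 1) := by
    intro t
    have hg : IntegrableOn (fun r : ℝ => C * r ^ (β-1-N)) (Set.Ioi 1) :=
      (integrableOn_Ioi_rpow_of_lt (by linarith) one_pos).const_mul C
    refine Integrable.mono' hg ?_ ?_
    · exact ((hmcont t).mono (Set.Ioi_subset_Ioi (by norm_num))).aestronglyMeasurable
        measurableSet_Ioi
    · filter_upwards [ae_restrict_mem measurableSet_Ioi] with r hr
      rw [norm_mul, expNorm, one_mul]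
      exact hb2 r hr.le
  have hint : ∀ t : ℝ, IntegrableOn
      (fun r : ℝ => Complex.exp (-(Complex.I * t * r)) * a r) (Set.Ioi 0) := by
    intro t
    have := (hint1 t).union (hint2 t)
    rwa [Set.Ioc_union_Ioi_eq_Ioi (by norm_num : (0:ℝ) ≤ 1)] at this
  refine ⟨hint, ?_⟩
  intro t ht
  have ht0 : (0:ℝ) < t := lt_of_lt_of_le one_pos ht
  set c : ℝ := t⁻¹ with hcdef
  have hc : 0 < c := inv_pos.2 ht0
  have hc1 : c ≤ 1 := by
    rw [hcdef]; exact inv_le_one_of_one_le₀ ht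
  have hit : Complex.I * t ≠ 0 := by
    apply mul_ne_zero Complex.I_ne_zero
    exact_mod_cast ht0.ne'
  -- key rpow values:
  have hcb : c ^ (β - 1) = t ^ (1 - β) := by
    rw [hcdef, Real.inv_rpow ht0.le, ← Real.rpow_neg ht0.le]; ring_nf
  have hcb2 : c ^ β = t ^ (-β) := by
    rw [hcdef, Real.inv_rpow ht0.le, ← Real.rpow_neg ht0.le]
  have htb : t ^ (1 - β) * t⁻¹ = t ^ (-β) := by
    rw [← Real.rpow_neg_one t, ← Real.rpow_add ht0]; ring_nf
  -- split the integral
  have hsplit : (∫ r in Set.Ioi (0:ℝ), Complex.exp (-(Complex.I * t * r)) * a r)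
      = (∫ r in Set.Ioc 0 c, Complex.exp (-(Complex.I * t * r)) * a r)
      + ∫ r in Set.Ioi c, Complex.exp (-(Complex.I * t * r)) * a r := by
    rw [← setIntegral_union (Set.Ioc_disjoint_Ioi le_rfl) measurableSet_Ioi
      ((hint t).mono_set Set.Ioc_subset_Ioi_self)
      ((hint t).mono_set (Set.Ioi_subset_Ioi hc.le)),
      Set.Ioc_union_Ioi_eq_Ioi hc.le]
  -- Piece 1
  have hP1 : ‖∫ r in Set.Ioc 0 c, Complex.exp (-(Complex.I * t * r)) * a r‖
      ≤ (C / β) * t ^ (-β) := by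
    have hg : IntegrableOn (fun r : ℝ => C * r ^ (β-1)) (Set.Ioc 0 c) := by
      have := (intervalIntegral.intervalIntegrable_rpow' (a := 0) (b := c)
        (show (-1:ℝ) < β - 1 by linarith)).const_mul C
      rwa [intervalIntegrable_iff_integrableOn_Ioc_of_le hc.le] at this
    have h1 : ‖∫ r in Set.Ioc 0 c, Complex.exp (-(Complex.I * t * r)) * a r‖
        ≤ ∫ r in Set.Ioc 0 c, C * r ^ (β-1) := by
      refine norm_integral_le_of_norm_le hg ?_
      filter_upwards [ae_restrict_mem measurableSet_Ioc] with r hr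
      rw [norm_mul, expNorm, one_mul]
      exact hb1 r hr.1
    refine h1.trans ?_
    have h2 : (∫ r in Set.Ioc 0 c, C * r ^ (β-1)) = C / β * t ^ (-β) := by
      rw [← intervalIntegral.integral_of_le hc.le, intervalIntegral.integral_const_mul,
        integral_rpow (Or.inl (by linarith))]
      rw [Real.zero_rpow (by linarith : β - 1 + 1 ≠ 0)]
      rw [show β - 1 + 1 = β by ring, hcb2]
      ring
    exact le_of_eq h2
  -- Piece 2 via integration by parts
  set F : ℝ → ℂ := fun r => Complex.exp (-(Complex.I * t * r)) * a r * (-(Complex.I * t))⁻¹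
    with hFdef
  set G : ℝ → ℂ := fun r => Complex.exp (-(Complex.I * t * r)) * deriv a r * (-(Complex.I * t))⁻¹
    with hGdef
  have hFd : ∀ r : ℝ, 0 < r → HasDerivAt F
      (Complex.exp (-(Complex.I * t * r)) * a r + G r) r := by
    intro r hr
    have h := ((expHasDeriv t r).mul (hdiff r hr)).mul_const (-(Complex.I * t))⁻¹
    refine h.congr_deriv ?_
    rw [hGdef]
    have hit' : -(Complex.I * t) ≠ 0 := neg_ne_zero.2 hit
    have ht' : (t:ℂ) ≠ 0 := by exact_mod_cast ht0.ne'
    field_simp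
    ring
  have hnormInv : ‖(-(Complex.I * (t:ℂ)))⁻¹‖ = t⁻¹ := by
    rw [norm_inv, norm_neg, norm_mul, Complex.norm_I, one_mul, Complex.norm_real,
      Real.norm_of_nonneg ht0.le]
  -- integrability of G on Ioi c
  have hGint : IntegrableOn G (Set.Ioi c) := by
    have hg : IntegrableOn (fun r : ℝ => C * r ^ (β-2) * t⁻¹) (Set.Ioi c) := by
      have := ((integrableOn_Ioi_rpow_of_lt (show β - 2 < -1 by linarith) hc).const_mul
        C).mul_const t⁻¹
      exact this
    refine Integrable.mono' hg ?_ ?_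
    · have : ContinuousOn G (Set.Ioi c) := by
        refine ContinuousOn.mul (ContinuousOn.mul ?_ (hdcont.mono (Set.Ioi_subset_Ioi hc.le)))
          continuousOn_const
        exact (Complex.continuous_exp.comp (by continuity)).continuousOn
      exact this.aestronglyMeasurable measurableSet_Ioi
    · filter_upwards [ae_restrict_mem measurableSet_Ioi] with r hr
      rw [hGdef]
      simp only [norm_mul, expNorm, one_mul, hnormInv]
      exact mul_le_mul_of_nonneg_right (hb1' r (hc.trans hr)) (by positivity)
  have hfint : IntegrableOn (fun r : ℝ => Complex.exp (-(Complex.I * t * r)) * a r)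
      (Set.Ioi c) := (hint t).mono_set (Set.Ioi_subset_Ioi hc.le)
  -- limit of F at infinity
  have hFlim : Tendsto F atTop (nhds 0) := by
    apply squeeze_zero_norm' (a := fun r : ℝ => C * r ^ (β - 1 - N))
    · filter_upwards [eventually_ge_atTop (1:ℝ)] with r hr
      rw [hFdef]
      simp only [norm_mul, expNorm, one_mul, hnormInv]
      calc ‖a r‖ * t⁻¹ ≤ ‖a r‖ * 1 := by
            apply mul_le_mul_of_nonneg_left _ (norm_nonneg _)
            exact inv_le_one_of_one_le₀ ht
        _ = ‖a r‖ := mul_one _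
        _ ≤ C * r ^ (β - 1 - N) := hb2 r hr
    · have := (tendsto_rpow_neg_atTop (show (0:ℝ) < N + 1 - β by linarith)).const_mul C
      simpa [show -(N + 1 - β) = β - 1 - N by ring] using this
  -- continuity of F at c
  have hFc : ContinuousWithinAt F (Set.Ici c) c :=
    ((hFd c hc).continuousAt).continuousWithinAt
  -- integration by parts identity
  have hkey : (∫ r in Set.Ioi c, (Complex.exp (-(Complex.I * t * r)) * a r + G r)) = 0 - F c :=
    integral_Ioi_of_hasDerivAt_of_tendsto hFc (fun x hx => hFd x (hc.trans hx))
      (hfint.add hGint) hFlim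
  rw [integral_add hfint hGint] at hkey
  have hIoi : (∫ r in Set.Ioi c, Complex.exp (-(Complex.I * t * r)) * a r)
      = -F c - ∫ r in Set.Ioi c, G r := by
    linear_combination hkey
  -- estimate Piece 2
  have hFcnorm : ‖F c‖ ≤ C * t ^ (-β) := by
    rw [hFdef]
    simp only [norm_mul, expNorm, one_mul, hnormInv]
    calc ‖a c‖ * t⁻¹ ≤ C * c ^ (β - 1) * t⁻¹ :=
          mul_le_mul_of_nonneg_right (hb1 c hc) (by positivity)
      _ = C * t ^ (-β) := by rw [hcb, mul_assoc, htb]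
  have hGnorm : ‖∫ r in Set.Ioi c, G r‖ ≤ (C / (1 - β)) * t ^ (-β) := by
    have hg : IntegrableOn (fun r : ℝ => C * r ^ (β-2) * t⁻¹) (Set.Ioi c) := by
      have := ((integrableOn_Ioi_rpow_of_lt (show β - 2 < -1 by linarith) hc).const_mul
        C).mul_const t⁻¹
      exact this
    have h1 : ‖∫ r in Set.Ioi c, G r‖ ≤ ∫ r in Set.Ioi c, C * r ^ (β-2) * t⁻¹ := by
      refine norm_integral_le_of_norm_le hg ?_
      filter_upwards [ae_restrict_mem measurableSet_Ioi] with r hr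
      rw [hGdef]
      simp only [norm_mul, expNorm, one_mul, hnormInv]
      exact mul_le_mul_of_nonneg_right (hb1' r (hc.trans hr)) (by positivity)
    refine h1.trans (le_of_eq ?_)
    have h2 : (∫ r in Set.Ioi c, C * r ^ (β-2) * t⁻¹)
        = (∫ r in Set.Ioi c, (r : ℝ) ^ (β-2)) * (C * t⁻¹) := by
      rw [← integral_mul_const]
      congr 1; ext r; ring
    rw [h2, integral_Ioi_rpow_of_lt (show β - 2 < -1 by linarith) hc,
      show β - 2 + 1 = β - 1 by ring, hcb, ← htb]
    have hne : (1:ℝ) - β ≠ 0 := by linarith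
    have hne' : β - 1 ≠ 0 := by linarith
    field_simp
    ring
  -- combine
  rw [hsplit]
  calc ‖(∫ r in Set.Ioc 0 c, Complex.exp (-(Complex.I * t * r)) * a r)
        + ∫ r in Set.Ioi c, Complex.exp (-(Complex.I * t * r)) * a r‖
      ≤ ‖∫ r in Set.Ioc 0 c, Complex.exp (-(Complex.I * t * r)) * a r‖
        + ‖∫ r in Set.Ioi c, Complex.exp (-(Complex.I * t * r)) * a r‖ := norm_add_le _ _
    _ ≤ (C / β) * t ^ (-β) + (‖F c‖ + ‖∫ r in Set.Ioi c, G r‖) := by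
        refine add_le_add hP1 ?_
        rw [hIoi]
        refine (norm_sub_le _ _).trans ?_
        simp
    _ ≤ (C / β) * t ^ (-β) + (C * t ^ (-β) + (C / (1 - β)) * t ^ (-β)) :=
        add_le_add_right (add_le_add hFcnorm hGnorm) _
    _ = C * (1/β + 1 + 1/(1-β)) * t ^ (-β) := by ring
end

section
/- Let μ > 0 and m ∈ {2, 3}, and suppose g : ℝ³ → ℂ is m-times continuously differentiable on ℝ³ \ {0} and for every integer N ≥ 0 there is C_N ≥ 0 such that ‖D^j g(k)‖ ≤ C_N ‖k‖^{μ−j}(1+‖k‖)^{−N} for all 0 ≤ j ≤ m and all k ≠ 0. Then the spherical average F(r) := ∫_{S²} |g(rσ)|² dσ(σ) is m-times continuously differentiable on (0,∞), and for every integer N ≥ 0 there is C'_N ≥ 0 such that |F^{(j)}(r)| ≤ C'_N r^{2μ−j}(1+r)^{−N} for all 0 ≤ j ≤ m and r > 0. -/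
open MeasureTheory

/-- The spherical average `F(r) = ∫_{S²} |g(rσ)|² dσ(σ)`, where `S²` is the unit sphere
in `ℝ³` with its 2-dimensional Hausdorff (surface) measure. -/
noncomputable def sphAvg (g : EuclideanSpace ℝ (Fin 3) → ℂ) (r : ℝ) : ℝ :=
  ∫ σ in Metric.sphere (0 : EuclideanSpace ℝ (Fin 3)) 1, ‖g (r • σ)‖ ^ 2 ∂(μH[2])

open Metric Set
open scoped NNReal

noncomputable def sphParam (p : ℝ × ℝ) : EuclideanSpace ℝ (Fin 3) :=
  WithLp.toLp 2 ![Real.sin p.1 * Real.cos p.2, Real.sin p.1 * Real.sin p.2, Real.cos p.1]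

lemma sphParam_lip : LipschitzWith 4 sphParam := by
  apply LipschitzWith.of_dist_le_mul
  intro p q
  have lipsin : LipschitzWith 1 Real.sin := by
    apply lipschitzWith_of_nnnorm_deriv_le Real.differentiable_sin
    intro x
    rw [Real.deriv_sin, ← NNReal.coe_le_coe, coe_nnnorm]
    simpa using Real.abs_cos_le_one x
  have lipcos : LipschitzWith 1 Real.cos := by
    apply lipschitzWith_of_nnnorm_deriv_le Real.differentiable_cos
    intro x
    rw [Real.deriv_cos', ← NNReal.coe_le_coe, coe_nnnorm]
    simpa using Real.abs_sin_le_one x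
  have h1 : dist p.1 q.1 ≤ dist p q := by rw [Prod.dist_eq]; exact le_max_left _ _
  have h2 : dist p.2 q.2 ≤ dist p q := by rw [Prod.dist_eq]; exact le_max_right _ _
  have hsin1 : |Real.sin p.1 - Real.sin q.1| ≤ dist p q := by
    have := lipsin.dist_le_mul p.1 q.1
    simpa [Real.dist_eq] using this.trans (by simpa using h1)
  have hcos1 : |Real.cos p.1 - Real.cos q.1| ≤ dist p q := by
    have := lipcos.dist_le_mul p.1 q.1
    simpa [Real.dist_eq] using this.trans (by simpa using h1)
  have hsin2 : |Real.sin p.2 - Real.sin q.2| ≤ dist p q := by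
    have := lipsin.dist_le_mul p.2 q.2
    simpa [Real.dist_eq] using this.trans (by simpa using h2)
  have hcos2 : |Real.cos p.2 - Real.cos q.2| ≤ dist p q := by
    have := lipcos.dist_le_mul p.2 q.2
    simpa [Real.dist_eq] using this.trans (by simpa using h2)
  have key : ∀ a b c d : ℝ, |a| ≤ 1 → |d| ≤ 1 → |a - c| ≤ dist p q → |b - d| ≤ dist p q →
      dist (a * b) (c * d) ≤ 2 * dist p q := by
    intro a b c d ha hd' hac hbd
    have : a * b - c * d = a * (b - d) + (a - c) * d := by ring
    rw [Real.dist_eq, this]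
    calc |a * (b - d) + (a - c) * d| ≤ |a * (b - d)| + |(a - c) * d| := abs_add_le _ _
      _ = |a| * |b - d| + |a - c| * |d| := by rw [abs_mul, abs_mul]
      _ ≤ 1 * dist p q + dist p q * 1 := by
          gcongr <;> first | exact abs_nonneg _ | assumption | exact dist_nonneg
      _ = 2 * dist p q := by ring
  have hd : ∀ i : Fin 3, dist (sphParam p i) (sphParam q i) ≤ 2 * dist p q := by
    intro i
    fin_cases i
    · exact key _ _ _ _ (Real.abs_sin_le_one _) (Real.abs_cos_le_one _) hsin1 hcos2
    · exact key _ _ _ _ (Real.abs_sin_le_one _) (Real.abs_sin_le_one _) hsin1 hsin2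
    · show dist (Real.cos p.1) (Real.cos q.1) ≤ 2 * dist p q
      rw [Real.dist_eq]
      nlinarith [dist_nonneg (x := p) (y := q)]
  rw [EuclideanSpace.dist_eq]
  have hsum : (∑ i : Fin 3, dist (sphParam p i) (sphParam q i) ^ 2) ≤ 12 * dist p q ^ 2 := by
    have hle : ∀ i : Fin 3, dist (sphParam p i) (sphParam q i) ^ 2 ≤ (2 * dist p q) ^ 2 := by
      intro i
      have := hd i
      nlinarith [dist_nonneg (x := sphParam p i) (y := sphParam q i)]
    calc (∑ i : Fin 3, dist (sphParam p i) (sphParam q i) ^ 2)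
        ≤ ∑ _i : Fin 3, (2 * dist p q) ^ 2 := Finset.sum_le_sum fun i _ => hle i
      _ = 12 * dist p q ^ 2 := by
          rw [Finset.sum_const]; simp; ring
  calc Real.sqrt (∑ i : Fin 3, dist (sphParam p i) (sphParam q i) ^ 2)
      ≤ Real.sqrt (16 * dist p q ^ 2) :=
        Real.sqrt_le_sqrt (by nlinarith [sq_nonneg (dist p q)])
    _ = 4 * dist p q := by
        rw [show (16 : ℝ) * dist p q ^ 2 = (4 * dist p q) ^ 2 by ring,
          Real.sqrt_sq (by positivity)]
    _ = ((4 : ℝ≥0) : ℝ) * dist p q := by norm_num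

lemma sphere_subset_image :
    Metric.sphere (0 : EuclideanSpace ℝ (Fin 3)) 1 ⊆ sphParam '' (Metric.closedBall 0 7) := by
  intro x hx
  have hnorm : ‖x‖ = 1 := by simpa using hx
  have hsum : x 0 ^ 2 + x 1 ^ 2 + x 2 ^ 2 = 1 := by
    have := EuclideanSpace.norm_eq x
    rw [hnorm] at this
    have h1 : Real.sqrt (∑ i : Fin 3, ‖x i‖ ^ 2) = 1 := this.symm
    have h2 : (∑ i : Fin 3, ‖x i‖ ^ 2) = 1 := Real.sqrt_eq_one.mp h1
    simpa [Fin.sum_univ_three, Real.norm_eq_abs, sq_abs] using h2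
  have hx2 : -1 ≤ x 2 ∧ x 2 ≤ 1 := by constructor <;> nlinarith
  set θ := Real.arccos (x 2) with hθ
  have hcosθ : Real.cos θ = x 2 := Real.cos_arccos hx2.1 hx2.2
  have hsinθ : Real.sin θ = Real.sqrt (x 0 ^ 2 + x 1 ^ 2) := by
    rw [hθ, Real.sin_arccos]
    congr 1
    nlinarith
  have hθmem : 0 ≤ θ ∧ θ ≤ Real.pi := ⟨Real.arccos_nonneg _, Real.arccos_le_pi _⟩
  by_cases hρ : x 0 ^ 2 + x 1 ^ 2 = 0
  · refine ⟨(θ, 0), ?_, ?_⟩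
    · rw [Metric.mem_closedBall, Prod.dist_eq]
      simp only [Prod.fst_zero, Prod.snd_zero, dist_zero_right]
      have : Real.pi ≤ 7 := by nlinarith [Real.pi_le_four]
      refine max_le ?_ ?_
      · rw [Real.norm_eq_abs, abs_of_nonneg hθmem.1]; linarith [hθmem.2]
      · simp
    · have h0 : x 0 = 0 := by nlinarith
      have h1 : x 1 = 0 := by nlinarith
      ext i
      fin_cases i
      · show Real.sin θ * Real.cos 0 = x 0
        rw [hsinθ, hρ, Real.sqrt_zero, h0]; ring
      · show Real.sin θ * Real.sin 0 = x 1
        rw [h1, Real.sin_zero]; ring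
      · show Real.cos θ = x 2
        exact hcosθ
  · set w : ℂ := ⟨x 0, x 1⟩ with hw
    have hwne : w ≠ 0 := by
      intro h
      apply hρ
      have h0 : x 0 = 0 := congrArg Complex.re h
      have h1 : x 1 = 0 := congrArg Complex.im h
      rw [h0, h1]; ring
    have habs : ‖w‖ = Real.sqrt (x 0 ^ 2 + x 1 ^ 2) := by
      rw [Complex.norm_def, Complex.normSq_mk]; ring_nf
    have habspos : 0 < ‖w‖ := by
      rwa [norm_pos_iff]
    refine ⟨(θ, Complex.arg w), ?_, ?_⟩
    · rw [Metric.mem_closedBall, Prod.dist_eq]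
      simp only [Prod.fst_zero, Prod.snd_zero, dist_zero_right]
      have hpi : Real.pi ≤ 7 := by nlinarith [Real.pi_le_four]
      refine max_le ?_ ?_
      · rw [Real.norm_eq_abs, abs_of_nonneg hθmem.1]; linarith [hθmem.2]
      · rw [Real.norm_eq_abs]
        have := Complex.abs_arg_le_pi w
        linarith
    · have hsin' : Real.sin θ = ‖w‖ := by rw [hsinθ, habs]
      ext i
      fin_cases i
      · show Real.sin θ * Real.cos (Complex.arg w) = x 0
        rw [Complex.cos_arg hwne, hsin']
        field_simp
        rfl
      · show Real.sin θ * Real.sin (Complex.arg w) = x 1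
        rw [Complex.sin_arg, hsin']
        field_simp
        rfl
      · exact hcosθ

lemma sphere_hausdorff_ne_top :
    μH[2] (Metric.sphere (0 : EuclideanSpace ℝ (Fin 3)) 1) ≠ ⊤ := by
  have h1 : μH[2] (Metric.sphere (0 : EuclideanSpace ℝ (Fin 3)) 1) ≤
      μH[2] (sphParam '' (Metric.closedBall 0 7)) := measure_mono sphere_subset_image
  have h2 : μH[2] (sphParam '' (Metric.closedBall 0 7)) ≤
      (4 : ℝ≥0) ^ (2 : ℝ) * μH[2] (Metric.closedBall (0 : ℝ × ℝ) 7) :=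
    sphParam_lip.hausdorffMeasure_image_le (by norm_num) _
  have h3 : (μH[2] : Measure (ℝ × ℝ)) (Metric.closedBall (0 : ℝ × ℝ) 7) < ⊤ := by
    rw [MeasureTheory.hausdorffMeasure_prod_real]
    exact measure_closedBall_lt_top
  refine ne_top_of_le_ne_top ?_ (h1.trans h2)
  exact ENNReal.mul_ne_top (by simp) h3.ne

lemma eqOn_iterChain {s : Set ℝ} (hs : IsOpen s) (V : ℕ → ℝ → ℝ) (j : ℕ)
    (hd : ∀ i < j, ∀ r ∈ s, HasDerivAt (V i) (V (i + 1) r) r) :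
    Set.EqOn (iteratedDerivWithin j (V 0) s) (V j) s := by
  induction j with
  | zero => intro r _; simp
  | succ n IH =>
    intro r hr
    have hd' : ∀ i < n, ∀ r ∈ s, HasDerivAt (V i) (V (i + 1) r) r :=
      fun i hi => hd i (by omega)
    have hIH := IH hd'
    rw [iteratedDerivWithin_succ,
      derivWithin_of_isOpen hs hr]
    have hev : iteratedDerivWithin n (V 0) s =ᶠ[nhds r] V n :=
      Filter.eventuallyEq_of_mem (hs.mem_nhds hr) hIH
    rw [hev.deriv_eq]
    exact (hd n (by omega) r hr).deriv

noncomputable def Bre : ℂ →L[ℝ] ℂ →L[ℝ] ℝ :=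
  (ContinuousLinearMap.compL ℝ ℂ ℂ ℝ Complex.reCLM).comp (ContinuousLinearMap.mul ℝ ℂ)

lemma Bre_apply (z w : ℂ) : Bre z w = (z * w).re := rfl

lemma Bre_normSq (z : ℂ) : Bre z ((starRingEnd ℂ) z) = ‖z‖ ^ 2 := by
  rw [Bre_apply, Complex.mul_conj]
  simp [Complex.normSq_eq_norm_sq, ← Complex.ofReal_pow]

lemma f_eq (g : EuclideanSpace ℝ (Fin 3) → ℂ) :
    (fun k => ‖g k‖ ^ 2) = fun y => Bre (g y) ((starRingEnd ℂ) (g y)) :=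
  funext fun y => (Bre_normSq (g y)).symm

lemma f_contDiffOn {m : ℕ} {g : EuclideanSpace ℝ (Fin 3) → ℂ}
    (hg : ContDiffOn ℝ m g {(0 : EuclideanSpace ℝ (Fin 3))}ᶜ) :
    ContDiffOn ℝ m (fun k => ‖g k‖ ^ 2) {(0 : EuclideanSpace ℝ (Fin 3))}ᶜ := by
  rw [f_eq g]
  have hg2 : ContDiffOn ℝ m (fun y => (starRingEnd ℂ) (g y))
      {(0 : EuclideanSpace ℝ (Fin 3))}ᶜ :=
    Complex.conjCLE.contDiff.comp_contDiffOn hg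
  exact (Bre.contDiff.comp_contDiffOn hg).clm_apply hg2

lemma f_bound {m : ℕ} {μ : ℝ} {g : EuclideanSpace ℝ (Fin 3) → ℂ}
    (hg : ContDiffOn ℝ m g {(0 : EuclideanSpace ℝ (Fin 3))}ᶜ)
    {N : ℕ} {C : ℝ} (hC : 0 ≤ C)
    (hb : ∀ j : ℕ, j ≤ m → ∀ k : EuclideanSpace ℝ (Fin 3), k ≠ 0 →
      ‖iteratedFDerivWithin ℝ j g {(0 : EuclideanSpace ℝ (Fin 3))}ᶜ k‖ ≤
        C * ‖k‖ ^ (μ - (j : ℝ)) * (1 + ‖k‖) ^ (-(N : ℝ))) :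
    ∀ j : ℕ, j ≤ m → ∀ k : EuclideanSpace ℝ (Fin 3), k ≠ 0 →
      ‖iteratedFDerivWithin ℝ j (fun k => ‖g k‖ ^ 2)
          {(0 : EuclideanSpace ℝ (Fin 3))}ᶜ k‖ ≤
        (‖Bre‖ * 2 ^ m * C ^ 2) * ‖k‖ ^ (2 * μ - (j : ℝ)) * (1 + ‖k‖) ^ (-(N : ℝ)) := by
  intro j hj k hk
  set U : Set (EuclideanSpace ℝ (Fin 3)) := {0}ᶜ with hU
  have hUuniq : UniqueDiffOn ℝ U := isOpen_compl_singleton.uniqueDiffOn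
  have hmem : k ∈ U := hk
  have hk0 : (0 : ℝ) < ‖k‖ := norm_pos_iff.mpr hk
  have h1k : (0 : ℝ) < 1 + ‖k‖ := by linarith [norm_nonneg k]
  have hg2 : ContDiffOn ℝ m (fun y => (starRingEnd ℂ) (g y)) U :=
    Complex.conjCLE.contDiff.comp_contDiffOn hg
  have hconjnorm : ∀ i : ℕ,
      ‖iteratedFDerivWithin ℝ i (fun y => (starRingEnd ℂ) (g y)) U k‖ =
      ‖iteratedFDerivWithin ℝ i g U k‖ := by
    intro i
    have := Complex.conjLIE.norm_iteratedFDerivWithin_comp_left g hUuniq hmem i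
    simpa [Function.comp_def, Complex.conjLIE_apply] using this
  rw [f_eq g]
  have main := Bre.norm_iteratedFDerivWithin_le_of_bilinear hg hg2 hUuniq hmem
    (n := j) (by exact_mod_cast hj)
  refine main.trans ?_
  have hterm : ∀ i ∈ Finset.range (j + 1),
      (j.choose i : ℝ) * ‖iteratedFDerivWithin ℝ i g U k‖ *
        ‖iteratedFDerivWithin ℝ (j - i) (fun y => (starRingEnd ℂ) (g y)) U k‖ ≤
      (j.choose i : ℝ) * (C ^ 2 * ‖k‖ ^ (2 * μ - (j : ℝ)) * (1 + ‖k‖) ^ (-(N : ℝ))) := by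
    intro i hi
    have hij : i ≤ j := by simpa using Nat.lt_succ_iff.mp (Finset.mem_range.mp hi)
    rw [hconjnorm]
    have b1 := hb i (hij.trans hj) k hk
    have b2 := hb (j - i) ((Nat.sub_le j i).trans hj) k hk
    have hcast : ((j - i : ℕ) : ℝ) = (j : ℝ) - (i : ℝ) := by
      rw [Nat.cast_sub hij]
    have prod_le : ‖iteratedFDerivWithin ℝ i g U k‖ *
        ‖iteratedFDerivWithin ℝ (j - i) g U k‖ ≤
        (C * ‖k‖ ^ (μ - (i : ℝ)) * (1 + ‖k‖) ^ (-(N : ℝ))) *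
        (C * ‖k‖ ^ (μ - ((j - i : ℕ) : ℝ)) * (1 + ‖k‖) ^ (-(N : ℝ))) := by
      apply mul_le_mul b1 b2 (norm_nonneg _) (by positivity)
    have heq : (C * ‖k‖ ^ (μ - (i : ℝ)) * (1 + ‖k‖) ^ (-(N : ℝ))) *
        (C * ‖k‖ ^ (μ - ((j - i : ℕ) : ℝ)) * (1 + ‖k‖) ^ (-(N : ℝ))) ≤
        C ^ 2 * ‖k‖ ^ (2 * μ - (j : ℝ)) * (1 + ‖k‖) ^ (-(N : ℝ)) := by
      have hxx : ‖k‖ ^ (μ - (i : ℝ)) * ‖k‖ ^ (μ - ((j - i : ℕ) : ℝ)) =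
          ‖k‖ ^ (2 * μ - (j : ℝ)) := by
        rw [← Real.rpow_add hk0, hcast]; ring_nf
      have hyy : (1 + ‖k‖) ^ (-(N : ℝ)) * (1 + ‖k‖) ^ (-(N : ℝ)) ≤
          (1 + ‖k‖) ^ (-(N : ℝ)) := by
        rw [← Real.rpow_add h1k]
        apply Real.rpow_le_rpow_of_exponent_le (by linarith [norm_nonneg k])
        have : (0 : ℝ) ≤ (N : ℝ) := Nat.cast_nonneg N
        linarith
      calc (C * ‖k‖ ^ (μ - (i : ℝ)) * (1 + ‖k‖) ^ (-(N : ℝ))) *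
          (C * ‖k‖ ^ (μ - ((j - i : ℕ) : ℝ)) * (1 + ‖k‖) ^ (-(N : ℝ)))
          = (C ^ 2 * ‖k‖ ^ (2 * μ - (j : ℝ))) *
            ((1 + ‖k‖) ^ (-(N : ℝ)) * (1 + ‖k‖) ^ (-(N : ℝ))) := by
            rw [← hxx]; ring
        _ ≤ (C ^ 2 * ‖k‖ ^ (2 * μ - (j : ℝ))) * (1 + ‖k‖) ^ (-(N : ℝ)) := by
            apply mul_le_mul_of_nonneg_left hyy (by positivity)
        _ = C ^ 2 * ‖k‖ ^ (2 * μ - (j : ℝ)) * (1 + ‖k‖) ^ (-(N : ℝ)) := by ring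
    have := prod_le.trans heq
    calc (j.choose i : ℝ) * ‖iteratedFDerivWithin ℝ i g U k‖ *
        ‖iteratedFDerivWithin ℝ (j - i) g U k‖
        = (j.choose i : ℝ) * (‖iteratedFDerivWithin ℝ i g U k‖ *
          ‖iteratedFDerivWithin ℝ (j - i) g U k‖) := by ring
      _ ≤ (j.choose i : ℝ) * (C ^ 2 * ‖k‖ ^ (2 * μ - (j : ℝ)) * (1 + ‖k‖) ^ (-(N : ℝ))) :=
          mul_le_mul_of_nonneg_left this (Nat.cast_nonneg _)
  have hsum := Finset.sum_le_sum hterm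
  have hchoose : (∑ i ∈ Finset.range (j + 1), (j.choose i : ℝ)) = (2 : ℝ) ^ j := by
    rw [← Nat.cast_sum]
    rw [Nat.sum_range_choose]
    push_cast
    ring
  calc ‖Bre‖ * ∑ i ∈ Finset.range (j + 1), (j.choose i : ℝ) *
        ‖iteratedFDerivWithin ℝ i g U k‖ *
        ‖iteratedFDerivWithin ℝ (j - i) (fun y => (starRingEnd ℂ) (g y)) U k‖
      ≤ ‖Bre‖ * ∑ i ∈ Finset.range (j + 1), (j.choose i : ℝ) *
        (C ^ 2 * ‖k‖ ^ (2 * μ - (j : ℝ)) * (1 + ‖k‖) ^ (-(N : ℝ))) :=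
        mul_le_mul_of_nonneg_left hsum (ContinuousLinearMap.opNorm_nonneg Bre)
    _ = ‖Bre‖ * ((2 : ℝ) ^ j * (C ^ 2 * ‖k‖ ^ (2 * μ - (j : ℝ)) * (1 + ‖k‖) ^ (-(N : ℝ)))) := by
        rw [← Finset.sum_mul, hchoose]
    _ ≤ ‖Bre‖ * ((2 : ℝ) ^ m * (C ^ 2 * ‖k‖ ^ (2 * μ - (j : ℝ)) * (1 + ‖k‖) ^ (-(N : ℝ)))) := by
        have h2 : (2 : ℝ) ^ j ≤ 2 ^ m := pow_le_pow_right₀ (by norm_num) hj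
        have hX : (0 : ℝ) ≤ C ^ 2 * ‖k‖ ^ (2 * μ - (j : ℝ)) * (1 + ‖k‖) ^ (-(N : ℝ)) := by
          positivity
        exact mul_le_mul_of_nonneg_left (mul_le_mul_of_nonneg_right h2 hX)
          (ContinuousLinearMap.opNorm_nonneg Bre)
    _ = (‖Bre‖ * 2 ^ m * C ^ 2) * ‖k‖ ^ (2 * μ - (j : ℝ)) * (1 + ‖k‖) ^ (-(N : ℝ)) := by
        ring

/-- if `μ > 0`, `m ∈ {2,3}`, and `g` is `m`-times continuously differentiable
away from `0` with `‖D^j g(k)‖ ≤ C_N ‖k‖^{μ-j}(1+‖k‖)^{-N}` for `0 ≤ j ≤ m`, `k ≠ 0`, every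
`N`, then the spherical average `F(r) = ∫_{S²} |g(rσ)|² dσ` is `m`-times continuously
differentiable on `(0,∞)` and `|F^{(j)}(r)| ≤ C'_N r^{2μ-j}(1+r)^{-N}` for `0 ≤ j ≤ m`,
`r > 0`, every `N`. -/
theorem stmt8 (m : ℕ) (hm : m = 2 ∨ m = 3) (μ : ℝ) (hμ : 0 < μ)
    (g : EuclideanSpace ℝ (Fin 3) → ℂ)
    (hg : ContDiffOn ℝ m g {(0 : EuclideanSpace ℝ (Fin 3))}ᶜ)
    (hbound : ∀ N : ℕ, ∃ C : ℝ, 0 ≤ C ∧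
      ∀ j : ℕ, j ≤ m → ∀ k : EuclideanSpace ℝ (Fin 3), k ≠ 0 →
        ‖iteratedFDerivWithin ℝ j g {(0 : EuclideanSpace ℝ (Fin 3))}ᶜ k‖ ≤
          C * ‖k‖ ^ (μ - (j : ℝ)) * (1 + ‖k‖) ^ (-(N : ℝ))) :
    ContDiffOn ℝ m (sphAvg g) (Set.Ioi 0) ∧
    ∀ N : ℕ, ∃ C' : ℝ, 0 ≤ C' ∧
      ∀ j : ℕ, j ≤ m → ∀ r : ℝ, 0 < r →
        |iteratedDerivWithin j (sphAvg g) (Set.Ioi 0) r| ≤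
          C' * r ^ (2 * μ - (j : ℝ)) * (1 + r) ^ (-(N : ℝ)) := by
  classical
  set U : Set (EuclideanSpace ℝ (Fin 3)) := {0}ᶜ with hUdef
  have hUopen : IsOpen U := isOpen_compl_singleton
  have hUuniq : UniqueDiffOn ℝ U := hUopen.uniqueDiffOn
  have hOuniq : UniqueDiffOn ℝ ({(0 : ℝ)}ᶜ) := isOpen_compl_singleton.uniqueDiffOn
  set S := Metric.sphere (0 : EuclideanSpace ℝ (Fin 3)) 1 with hSdef
  have hSmeas : MeasurableSet S := Metric.isClosed_sphere.measurableSet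
  haveI hfin : IsFiniteMeasure
      ((μH[2] : Measure (EuclideanSpace ℝ (Fin 3))).restrict S) := by
    constructor
    rw [Measure.restrict_apply_univ]
    exact lt_top_iff_ne_top.mpr sphere_hausdorff_ne_top
  set f : EuclideanSpace ℝ (Fin 3) → ℝ := fun k => ‖g k‖ ^ 2 with hfdef
  have hf : ContDiffOn ℝ m f U := f_contDiffOn hg
  -- the pointwise integrand derivatives
  set w : ℕ → ℝ → EuclideanSpace ℝ (Fin 3) → ℝ :=
    fun j r σ => (iteratedFDerivWithin ℝ j f U (r • σ)) (fun _ => σ) with hwdef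
  -- smoothness of t ↦ f (t • σ)
  have hpre : ∀ σ : EuclideanSpace ℝ (Fin 3), σ ≠ 0 →
      (⇑((1 : ℝ →L[ℝ] ℝ).smulRight σ)) ⁻¹' U = {(0 : ℝ)}ᶜ := by
    intro σ hσ
    ext t
    simp [hUdef, smul_eq_zero, hσ]
  have hcomp_eq : ∀ σ : EuclideanSpace ℝ (Fin 3),
      (f ∘ ⇑((1 : ℝ →L[ℝ] ℝ).smulRight σ)) = fun t => f (t • σ) := by
    intro σ; funext t; simp
  have hhsm : ∀ σ : EuclideanSpace ℝ (Fin 3), σ ≠ 0 →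
      ContDiffOn ℝ m (fun t => f (t • σ)) {(0 : ℝ)}ᶜ := by
    intro σ hσ
    have := hf.comp_continuousLinearMap ((1 : ℝ →L[ℝ] ℝ).smulRight σ)
    rwa [hpre σ hσ, hcomp_eq σ] at this
  -- representation of the iterated derivatives
  have hrep : ∀ σ : EuclideanSpace ℝ (Fin 3), σ ≠ 0 → ∀ r : ℝ, r ≠ 0 →
      ∀ j : ℕ, j ≤ m →
      iteratedDerivWithin j (fun t => f (t • σ)) {(0 : ℝ)}ᶜ r = w j r σ := by
    intro σ hσ r hr j hj
    rw [iteratedDerivWithin_eq_iteratedFDerivWithin]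
    rw [← hcomp_eq σ, ← hpre σ hσ]
    have hx : ((1 : ℝ →L[ℝ] ℝ).smulRight σ) r ∈ U := by
      simp [hUdef, smul_eq_zero, hσ, hr]
    rw [ContinuousLinearMap.iteratedFDerivWithin_comp_right _ hf hUuniq
      (by rw [hpre σ hσ]; exact hOuniq) hx (by exact_mod_cast hj)]
    simp [hwdef]
  -- derivative step
  have hderiv : ∀ σ : EuclideanSpace ℝ (Fin 3), σ ≠ 0 → ∀ j : ℕ, j < m →
      ∀ r : ℝ, r ≠ 0 → HasDerivAt (fun t => w j t σ) (w (j + 1) r σ) r := by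
    intro σ hσ j hjm r hr
    have hrO : r ∈ ({(0 : ℝ)}ᶜ : Set ℝ) := hr
    have hdo := (hhsm σ hσ).differentiableOn_iteratedDerivWithin
      (show (j : WithTop ℕ∞) < m by exact_mod_cast hjm) hOuniq
    have h1 := (hdo r hrO).hasDerivWithinAt
    rw [← iteratedDerivWithin_succ] at h1
    have h2 := h1.hasDerivAt (isOpen_compl_singleton.mem_nhds hrO)
    rw [hrep σ hσ r hr (j + 1) (by omega)] at h2
    apply h2.congr_of_eventuallyEq
    filter_upwards [isOpen_compl_singleton.mem_nhds hrO] with t ht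
    exact (hrep σ hσ t ht j (by omega)).symm
  -- uniform bound
  have hwb : ∀ N : ℕ, ∀ C : ℝ, 0 ≤ C →
      (∀ j : ℕ, j ≤ m → ∀ k : EuclideanSpace ℝ (Fin 3), k ≠ 0 →
        ‖iteratedFDerivWithin ℝ j g {(0 : EuclideanSpace ℝ (Fin 3))}ᶜ k‖ ≤
          C * ‖k‖ ^ (μ - (j : ℝ)) * (1 + ‖k‖) ^ (-(N : ℝ))) →
      ∀ j : ℕ, j ≤ m → ∀ r : ℝ, 0 < r → ∀ σ, σ ∈ S →
        |w j r σ| ≤ (‖Bre‖ * 2 ^ m * C ^ 2) * r ^ (2 * μ - (j : ℝ)) *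
          (1 + r) ^ (-(N : ℝ)) := by
    intro N C hC hb j hj r hr σ hσ
    have hσn : ‖σ‖ = 1 := by simpa [hSdef] using hσ
    have hσ0 : σ ≠ 0 := by
      intro h; rw [h] at hσn; simp at hσn
    have hrσ : r • σ ≠ 0 := smul_ne_zero hr.ne' hσ0
    have hnorm : ‖r • σ‖ = r := by
      rw [norm_smul, hσn, Real.norm_eq_abs, abs_of_pos hr, mul_one]
    have h1 := (iteratedFDerivWithin ℝ j f U (r • σ)).le_opNorm (fun _ => σ)
    have h2 : (∏ _i : Fin j, ‖σ‖) = 1 := by simp [hσn]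
    have h3 := f_bound hg hC hb j hj (r • σ) hrσ
    rw [hnorm] at h3
    calc |w j r σ| ≤ ‖iteratedFDerivWithin ℝ j f U (r • σ)‖ * ∏ _i : Fin j, ‖σ‖ := by
          simpa [hwdef, Real.norm_eq_abs] using h1
      _ = ‖iteratedFDerivWithin ℝ j f U (r • σ)‖ := by rw [h2, mul_one]
      _ ≤ (‖Bre‖ * 2 ^ m * C ^ 2) * r ^ (2 * μ - (j : ℝ)) * (1 + r) ^ (-(N : ℝ)) := h3
  -- continuity in σ for fixed r
  have hwcontσ : ∀ j : ℕ, j ≤ m → ∀ r : ℝ, r ≠ 0 →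
      ContinuousOn (fun σ => w j r σ) {σ : EuclideanSpace ℝ (Fin 3) | σ ≠ 0} := by
    intro j hj r hr
    have h1 : ContinuousOn (iteratedFDerivWithin ℝ j f U) U :=
      hf.continuousOn_iteratedFDerivWithin (by exact_mod_cast hj) hUuniq
    have h2 : ContinuousOn (fun σ : EuclideanSpace ℝ (Fin 3) =>
        iteratedFDerivWithin ℝ j f U (r • σ)) {σ | σ ≠ 0} := by
      apply h1.comp ((continuous_const_smul r).continuousOn)
      intro σ hσ
      exact smul_ne_zero hr hσ
    have heval := continuous_eval.comp_continuousOn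
      (h2.prodMk (continuous_pi fun _ : Fin j => continuous_id).continuousOn)
    exact heval
  have haesm : ∀ j : ℕ, j ≤ m → ∀ r : ℝ, r ≠ 0 →
      AEStronglyMeasurable (fun σ => w j r σ)
        ((μH[2] : Measure (EuclideanSpace ℝ (Fin 3))).restrict S) := by
    intro j hj r hr
    apply ContinuousOn.aestronglyMeasurable _ hSmeas
    apply (hwcontσ j hj r hr).mono
    intro σ hσ
    have hσn : ‖σ‖ = 1 := by simpa [hSdef] using hσ
    intro h; rw [h] at hσn; simp at hσn
  obtain ⟨C0, hC0, hb0⟩ := hbound 0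
  have hwint : ∀ j : ℕ, j ≤ m → ∀ r : ℝ, 0 < r →
      Integrable (fun σ => w j r σ)
        ((μH[2] : Measure (EuclideanSpace ℝ (Fin 3))).restrict S) := by
    intro j hj r hr
    apply Integrable.mono' (integrable_const
      ((‖Bre‖ * 2 ^ m * C0 ^ 2) * r ^ (2 * μ - (j : ℝ)) * (1 + r) ^ (-(0 : ℕ) : ℝ)))
      (haesm j hj r hr.ne')
    filter_upwards [ae_restrict_mem hSmeas] with σ hσ
    rw [Real.norm_eq_abs]
    exact hwb 0 C0 hC0 hb0 j hj r hr σ hσ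
  -- the integrals
  set V : ℕ → ℝ → ℝ :=
    fun j r => ∫ σ in S, w j r σ ∂(μH[2]) with hVdef
  have hV0 : V 0 = sphAvg g := by
    funext r
    unfold sphAvg
    apply integral_congr_ae
    apply Filter.Eventually.of_forall
    intro σ
    simp [hVdef, hwdef, iteratedFDerivWithin_zero_apply, hfdef]
  -- derivative of V j
  have hVderiv : ∀ j : ℕ, j < m → ∀ r₀ : ℝ, 0 < r₀ →
      HasDerivAt (V j) (V (j + 1) r₀) r₀ := by
    intro j hjm r₀ hr₀
    have hball : ∀ x : ℝ, x ∈ Metric.ball r₀ (r₀ / 2) → r₀ / 2 < x ∧ x < 2 * r₀ := by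
      intro x hx
      rw [Metric.mem_ball, Real.dist_eq, abs_lt] at hx
      constructor <;> linarith
    set e : ℝ := 2 * μ - ((j : ℝ) + 1) with hedef
    set c : ℝ := (‖Bre‖ * 2 ^ m * C0 ^ 2) * ((r₀ / 2) ^ e + (2 * r₀) ^ e) with hcdef
    have key := hasDerivAt_integral_of_dominated_loc_of_deriv_le
      (F := fun x σ => w j x σ) (F' := fun x σ => w (j + 1) x σ)
      (μ := (μH[2] : Measure (EuclideanSpace ℝ (Fin 3))).restrict S)
      (bound := fun _ => c)
      (x₀ := r₀) (s := Metric.ball r₀ (r₀ / 2)) (Metric.ball_mem_nhds r₀ (by linarith))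
      ?_ (hwint j hjm.le r₀ hr₀) (haesm (j + 1) (by omega) r₀ hr₀.ne') ?_
      (integrable_const c) ?_
    · exact key.2
    · filter_upwards [isOpen_ne.mem_nhds hr₀.ne'] with x hx
      exact haesm j hjm.le x hx
    · filter_upwards [ae_restrict_mem hSmeas] with σ hσ
      intro x hx
      obtain ⟨hx1, hx2⟩ := hball x hx
      have hxpos : 0 < x := by linarith
      have h1 := hwb 0 C0 hC0 hb0 (j + 1) (by omega) x hxpos σ hσ
      rw [Real.norm_eq_abs]
      have hcast : (((j : ℕ) + 1 : ℕ) : ℝ) = (j : ℝ) + 1 := by push_cast; ring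
      rw [show (-(0 : ℕ) : ℝ) = 0 by norm_num, Real.rpow_zero, mul_one] at h1
      have hxe : x ^ (2 * μ - (((j : ℕ) + 1 : ℕ) : ℝ)) ≤ (r₀ / 2) ^ e + (2 * r₀) ^ e := by
        rw [hcast, ← hedef]
        rcases le_or_gt 0 e with he | he
        · have := Real.rpow_le_rpow hxpos.le hx2.le he
          have h2 : (0:ℝ) ≤ (r₀ / 2) ^ e := Real.rpow_nonneg (by linarith) e
          linarith
        · have := Real.rpow_le_rpow_of_nonpos (by linarith : (0:ℝ) < r₀ / 2) hx1.le he.le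
          have h2 : (0:ℝ) ≤ (2 * r₀) ^ e := Real.rpow_nonneg (by linarith) e
          linarith
      calc |w (j + 1) x σ| ≤ (‖Bre‖ * 2 ^ m * C0 ^ 2) *
            x ^ (2 * μ - (((j : ℕ) + 1 : ℕ) : ℝ)) := h1
        _ ≤ c := by
            rw [hcdef]
            apply mul_le_mul_of_nonneg_left hxe (by positivity)
    · filter_upwards [ae_restrict_mem hSmeas] with σ hσ
      intro x hx
      obtain ⟨hx1, hx2⟩ := hball x hx
      have hσn : ‖σ‖ = 1 := by simpa [hSdef] using hσ
      have hσ0 : σ ≠ 0 := by intro h; rw [h] at hσn; simp at hσn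
      have hxpos : (0:ℝ) < x := by
        have := hr₀
        linarith
      exact hderiv σ hσ0 j hjm x hxpos.ne'
  -- continuity of V j on Ioi 0
  have hVcont : ∀ j : ℕ, j ≤ m → ContinuousOn (V j) (Set.Ioi 0) := by
    intro j hj
    intro r₀ hr₀
    have hr₀' : (0 : ℝ) < r₀ := hr₀
    apply ContinuousAt.continuousWithinAt
    have hball : ∀ x : ℝ, x ∈ Metric.ball r₀ (r₀ / 2) → r₀ / 2 < x ∧ x < 2 * r₀ := by
      intro x hx
      rw [Metric.mem_ball, Real.dist_eq, abs_lt] at hx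
      constructor <;> linarith
    set e : ℝ := 2 * μ - (j : ℝ) with hedef
    set c : ℝ := (‖Bre‖ * 2 ^ m * C0 ^ 2) * ((r₀ / 2) ^ e + (2 * r₀) ^ e) with hcdef
    apply continuousAt_of_dominated (bound := fun _ => c)
    · filter_upwards [isOpen_ne.mem_nhds hr₀'.ne'] with x hx
      exact haesm j hj x hx
    · filter_upwards [Metric.ball_mem_nhds r₀ (by linarith : (0:ℝ) < r₀ / 2)] with x hx
      filter_upwards [ae_restrict_mem hSmeas] with σ hσ
      obtain ⟨hx1, hx2⟩ := hball x hx
      have hxpos : 0 < x := by linarith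
      have h1 := hwb 0 C0 hC0 hb0 j hj x hxpos σ hσ
      rw [show (-(0 : ℕ) : ℝ) = 0 by norm_num, Real.rpow_zero, mul_one] at h1
      rw [Real.norm_eq_abs]
      have hxe : x ^ (2 * μ - (j : ℝ)) ≤ (r₀ / 2) ^ e + (2 * r₀) ^ e := by
        rw [← hedef]
        rcases le_or_gt 0 e with he | he
        · have := Real.rpow_le_rpow hxpos.le hx2.le he
          have h2 : (0:ℝ) ≤ (r₀ / 2) ^ e := Real.rpow_nonneg (by linarith) e
          rw [hedef] at this ⊢
          linarith
        · have := Real.rpow_le_rpow_of_nonpos (by linarith : (0:ℝ) < r₀ / 2) hx1.le he.le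
          have h2 : (0:ℝ) ≤ (2 * r₀) ^ e := Real.rpow_nonneg (by linarith) e
          rw [hedef] at this ⊢
          linarith
      calc |w j x σ| ≤ (‖Bre‖ * 2 ^ m * C0 ^ 2) * x ^ (2 * μ - (j : ℝ)) := h1
        _ ≤ c := by
            rw [hcdef]
            apply mul_le_mul_of_nonneg_left hxe (by positivity)
    · exact integrable_const c
    · filter_upwards [ae_restrict_mem hSmeas] with σ hσ
      have hσn : ‖σ‖ = 1 := by simpa [hSdef] using hσ
      have hσ0 : σ ≠ 0 := by intro h; rw [h] at hσn; simp at hσn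
      -- continuity in x
      have hcr : ContinuousOn (fun x : ℝ => w j x σ) {x : ℝ | x ≠ 0} := by
        have h1 : ContinuousOn (iteratedFDerivWithin ℝ j f U) U :=
          hf.continuousOn_iteratedFDerivWithin (by exact_mod_cast hj) hUuniq
        have h2 : ContinuousOn (fun x : ℝ => iteratedFDerivWithin ℝ j f U (x • σ))
            {x : ℝ | x ≠ 0} := by
          apply h1.comp (continuous_id.smul continuous_const).continuousOn
          intro x hx
          exact smul_ne_zero hx hσ0
        have heval := continuous_eval.comp_continuousOn
          (h2.prodMk (continuousOn_const :
            ContinuousOn (fun _ : ℝ => (fun _ : Fin j => σ)) {x : ℝ | x ≠ 0}))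
        exact heval
      have := (hcr r₀ hr₀'.ne').continuousAt (isOpen_ne.mem_nhds hr₀'.ne')
      exact this
  -- identification of iterated derivatives
  have hEq : ∀ j : ℕ, j ≤ m →
      Set.EqOn (iteratedDerivWithin j (sphAvg g) (Set.Ioi 0)) (V j) (Set.Ioi 0) := by
    intro j hj
    have := eqOn_iterChain isOpen_Ioi V j
      (fun i hi r hr => hVderiv i (by omega) r hr)
    rwa [hV0] at this
  constructor
  · rw [contDiffOn_nat_iff_continuousOn_differentiableOn_deriv isOpen_Ioi.uniqueDiffOn]
    constructor
    · intro j hj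
      exact ContinuousOn.congr (hVcont j hj) (hEq j hj)
    · intro j hj
      apply DifferentiableOn.congr (fun r hr =>
        (hVderiv j hj r hr).differentiableAt.differentiableWithinAt)
      intro r hr
      exact hEq j hj.le hr
  · intro N
    obtain ⟨C, hC, hbN⟩ := hbound N
    refine ⟨((μH[2] : Measure (EuclideanSpace ℝ (Fin 3))) S).toReal *
      (‖Bre‖ * 2 ^ m * C ^ 2), by positivity, ?_⟩
    intro j hj r hr
    rw [hEq j hj (Set.mem_Ioi.mpr hr)]
    have hbd : ∀ᵐ σ ∂((μH[2] : Measure (EuclideanSpace ℝ (Fin 3))).restrict S),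
        ‖w j r σ‖ ≤ (‖Bre‖ * 2 ^ m * C ^ 2) * r ^ (2 * μ - (j : ℝ)) *
          (1 + r) ^ (-(N : ℝ)) := by
      filter_upwards [ae_restrict_mem hSmeas] with σ hσ
      rw [Real.norm_eq_abs]
      exact hwb N C hC hbN j hj r hr σ hσ
    have h1 := norm_integral_le_of_norm_le (integrable_const _) hbd
    rw [integral_const] at h1
    rw [measureReal_restrict_apply_univ] at h1
    rw [Real.norm_eq_abs] at h1
    calc |V j r| ≤ ((μH[2] : Measure (EuclideanSpace ℝ (Fin 3))) S).toReal •
          ((‖Bre‖ * 2 ^ m * C ^ 2) * r ^ (2 * μ - (j : ℝ)) * (1 + r) ^ (-(N : ℝ))) := h1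
      _ = ((μH[2] : Measure (EuclideanSpace ℝ (Fin 3))) S).toReal *
          (‖Bre‖ * 2 ^ m * C ^ 2) * r ^ (2 * μ - (j : ℝ)) * (1 + r) ^ (-(N : ℝ)) := by
          rw [smul_eq_mul]; ring
end
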